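/- For 1 ≤ m ≤ n, the quantities Φ(n:m) := C(n,m) ∑_{j=0}^m (-1)^{j+1} C(m,j) Φ(n-m+j) satisfy ∑_{m=1}^n Φ(n:m) = Φ(n), where Φ(0) = 0. -/

import Mathlib

/-- The binomial moments `Φ(n:m)` associated with a sequence `Φ`. -/
noncomputable def phiNM (Φ : ℕ → ℝ) (n m : ℕ) : ℝ :=
  (n.choose m : ℝ) *
    ∑ j ∈ Finset.range (m + 1), (-1 : ℝ) ^ (j + 1) * (m.choose j : ℝ) * Φ (n - m + j)

private lemma alt_real (N : ℕ) :
    ∑ i ∈ Finset.range (N + 1), (-1 : ℝ) ^ i * (N.choose i : ℝ)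
      = if N = 0 then 1 else 0 := by
  have h := Int.alternating_sum_range_choose (n := N)
  have h2 : ((∑ m ∈ Finset.range (N + 1), ((-1) ^ m * N.choose m : ℤ) : ℤ) : ℝ)
      = ((if N = 0 then 1 else 0 : ℤ) : ℝ) := by rw [h]
  push_cast at h2
  simpa using h2

theorem stmt0 (Φ : ℕ → ℝ) (hΦ0 : Φ 0 = 0) (n : ℕ) (hn : 1 ≤ n) :
    ∑ m ∈ Finset.Icc 1 n, phiNM Φ n m = Φ n := by
  have key : ∑ m ∈ Finset.range (n + 1), phiNM Φ n m = 0 := by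
    have h1 : ∀ m ∈ Finset.range (n + 1), phiNM Φ n m
        = ∑ j ∈ Finset.range (m + 1),
            (-1 : ℝ) ^ (m - j + 1) * (n.choose m : ℝ) * ((m.choose j : ℝ) * Φ (n - j)) := by
      intro m hm
      simp only [Finset.mem_range] at hm
      have hmn : m ≤ n := by omega
      rw [phiNM, Finset.mul_sum, ← Finset.sum_range_reflect]
      apply Finset.sum_congr rfl
      intro j hj
      simp only [Finset.mem_range] at hj
      have hjm : j ≤ m := by omega
      have e1 : m + 1 - 1 - j = m - j := by omega
      have e2 : n - m + (m - j) = n - j := by omega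
      have e3 : m.choose (m - j) = m.choose j := Nat.choose_symm hjm
      rw [e1, e2, e3]
      ring
    rw [Finset.sum_congr rfl h1]
    have swap := Finset.sum_Ico_Ico_comm 0 (n + 1)
      (fun i j => (-1 : ℝ) ^ (j - i + 1) * (n.choose j : ℝ) * ((j.choose i : ℝ) * Φ (n - i)))
    simp only [Finset.range_eq_Ico]
    rw [show (fun m => ∑ j ∈ Finset.Ico 0 (m + 1),
        (-1 : ℝ) ^ (m - j + 1) * (n.choose m : ℝ) * ((m.choose j : ℝ) * Φ (n - j)))
        = (fun m => ∑ j ∈ Finset.Ico 0 (m + 1),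
        (-1 : ℝ) ^ (m - j + 1) * (n.choose m : ℝ) * ((m.choose j : ℝ) * Φ (n - j))) from rfl]
    rw [← swap]
    apply Finset.sum_eq_zero
    intro i hi
    simp only [Finset.mem_Ico] at hi
    have hin : i ≤ n := by omega
    rw [Finset.sum_Ico_eq_sum_range]
    have hrange : n + 1 - i = (n - i) + 1 := by omega
    rw [hrange]
    by_cases hi_n : i = n
    · subst hi_n
      simp [hΦ0]
    · have hiltn : i < n := lt_of_le_of_ne hin hi_n
      have h2 : ∀ t ∈ Finset.range ((n - i) + 1),
          (-1 : ℝ) ^ (i + t - i + 1) * (n.choose (i + t) : ℝ) *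
            (((i + t).choose i : ℝ) * Φ (n - i))
          = ((n.choose i : ℝ) * Φ (n - i) * (-1)) * ((-1 : ℝ) ^ t * ((n - i).choose t : ℝ)) := by
        intro t ht
        simp only [Finset.mem_range] at ht
        have hit : i + t ≤ n := by omega
        have hc := Nat.choose_mul (n := n) (k := i + t) (s := i) (Nat.le_add_right i t)
        have hc' : (n.choose (i + t) : ℝ) * ((i + t).choose i : ℝ)
            = (n.choose i : ℝ) * ((n - i).choose t : ℝ) := by
          have e : i + t - i = t := by omega
          rw [e] at hc
          exact_mod_cast congrArg (Nat.cast : ℕ → ℝ) hc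
        have e1 : i + t - i = t := by omega
        rw [e1, pow_succ]
        linear_combination ((-1 : ℝ) ^ t * (-1) * Φ (n - i)) * hc'
      rw [Finset.sum_congr rfl h2, ← Finset.mul_sum, alt_real (n - i)]
      have : n - i ≠ 0 := by omega
      simp [this]
  have h0 : phiNM Φ n 0 = -Φ n := by
    simp [phiNM]
  have hsplit : ∑ m ∈ Finset.range (n + 1), phiNM Φ n m
      = phiNM Φ n 0 + ∑ m ∈ Finset.Icc 1 n, phiNM Φ n m := by
    rw [Finset.range_eq_Ico, Finset.sum_eq_sum_Ico_succ_bot (by omega : 0 < n + 1)]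
    rw [Finset.Ico_add_one_right_eq_Icc]
  rw [key, h0] at hsplit
  linarith
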